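/- Let A and B be real symmetric positive definite d×d matrices and let ℝ^d = V₁ ⊕ … ⊕ V_r be the orthogonal decomposition into eigenspaces of A with pairwise distinct eigenvalues. Define Σ* = Σ_{i=1}^r λ_i · P_{V_i}, where P_{V_i} is the orthogonal projection onto V_i and λ_i = √( tr(B|_{V_i}) / tr(B⁻¹|_{V_i}) ). Then Σ* is symmetric positive definite, aligned with A, and attains the infimum defining the misalignment: (1/2)·tr((Σ*)⁻¹B + B⁻¹Σ*) − d = M(A, B). -/

import Mathlib

open Matrix

/-- Eigenspace of a `d × d` real matrix `A` (acting on Euclidean space) for the (potential)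
eigenvalue `μ`. -/
noncomputable def eigSp {d : ℕ} (A : Matrix (Fin d) (Fin d) ℝ) (μ : ℝ) :
    Submodule ℝ (EuclideanSpace ℝ (Fin d)) :=
  Module.End.eigenspace (Matrix.toEuclideanLin A) μ

/-- `A` is aligned with `B` if every eigenspace of `B` is contained in an eigenspace of `A`. -/
def IsAligned {d : ℕ} (A B : Matrix (Fin d) (Fin d) ℝ) : Prop :=
  ∀ μ : ℝ, ∃ ν : ℝ, eigSp B μ ≤ eigSp A ν

/-- The misalignment `M(A, B)`: the infimum, over symmetric positive definite matrices `S`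
aligned with `A`, of `(1/2) · tr(S⁻¹ B + B⁻¹ S) − d`. -/
noncomputable def misalignment {d : ℕ} (A B : Matrix (Fin d) (Fin d) ℝ) : ℝ :=
  sInf {m : ℝ | ∃ S : Matrix (Fin d) (Fin d) ℝ,
    S.PosDef ∧ IsAligned S A ∧ m = (1 / 2) * (S⁻¹ * B + B⁻¹ * S).trace - d}

/-- `tr(B|_V)`: the trace of the linear map `V → V`, `v ↦ pr_V (B v)`, where `pr_V` is the
orthogonal projection onto the subspace `V`. -/
noncomputable def restrictTrace {d : ℕ} (B : Matrix (Fin d) (Fin d) ℝ)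
    (V : Submodule ℝ (EuclideanSpace ℝ (Fin d))) : ℝ :=
  LinearMap.trace ℝ V
    (((Submodule.orthogonalProjection V).toLinearMap.comp (Matrix.toEuclideanLin B)).comp V.subtype)

/-- The matrix of the orthogonal projection of `ℝ^d` onto the subspace `V`. -/
noncomputable def projMatrix {d : ℕ} (V : Submodule ℝ (EuclideanSpace ℝ (Fin d))) :
    Matrix (Fin d) (Fin d) ℝ :=
  Matrix.toEuclideanLin.symm (V.subtype.comp (Submodule.orthogonalProjection V).toLinearMap)

open scoped InnerProductSpace
variable {d : ℕ}

lemma toEL_mul (M N : Matrix (Fin d) (Fin d) ℝ) :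
    toEuclideanLin (M * N) = (toEuclideanLin M) ∘ₗ (toEuclideanLin N) := by
  simp [toEuclideanLin_eq_toLin, Matrix.toLin_mul _ (PiLp.basisFun 2 ℝ (Fin d)) _]

lemma toEL_one : toEuclideanLin (1 : Matrix (Fin d) (Fin d) ℝ) = LinearMap.id := by
  simp [toEuclideanLin_eq_toLin]

lemma trace_toEL (M : Matrix (Fin d) (Fin d) ℝ) :
    LinearMap.trace ℝ _ (toEuclideanLin M) = M.trace := by
  rw [toEuclideanLin_eq_toLin, LinearMap.trace_eq_matrix_trace ℝ (PiLp.basisFun 2 ℝ (Fin d)),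
    LinearMap.toMatrix_toLin]

lemma toEL_projMatrix (V : Submodule ℝ (EuclideanSpace ℝ (Fin d))) :
    toEuclideanLin (projMatrix V) = V.subtype.comp (Submodule.orthogonalProjection V).toLinearMap := by
  simp [projMatrix]

lemma projMatrix_isHermitian (V : Submodule ℝ (EuclideanSpace ℝ (Fin d))) :
    (projMatrix V).IsHermitian := by
  rw [Matrix.isHermitian_iff_isSymmetric, toEL_projMatrix]
  exact Submodule.starProjection_isSymmetric V

lemma inner_toEL (M : Matrix (Fin d) (Fin d) ℝ) (x : Fin d → ℝ) :
    ⟪(WithLp.equiv 2 _).symm x, toEuclideanLin M ((WithLp.equiv 2 _).symm x)⟫_ℝ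
      = x ⬝ᵥ (M *ᵥ x) := by
  simp [toEuclideanLin_apply, PiLp.inner_apply, dotProduct, mul_comm]

lemma posDef_iff_inner (M : Matrix (Fin d) (Fin d) ℝ) :
    M.PosDef ↔ M.IsHermitian ∧
      ∀ v : EuclideanSpace ℝ (Fin d), v ≠ 0 → 0 < ⟪v, toEuclideanLin M v⟫_ℝ := by
  rw [Matrix.posDef_iff_dotProduct_mulVec]
  constructor
  · rintro ⟨h1, h2⟩
    refine ⟨h1, fun v hv => ?_⟩
    have := h2 (x := WithLp.equiv 2 _ v) (by simpa using hv)
    simpa [← inner_toEL] using this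
  · rintro ⟨h1, h2⟩
    refine ⟨h1, fun ⦃x⦄ hx => ?_⟩
    have := h2 ((WithLp.equiv 2 _).symm x) (by simpa using hx)
    rw [inner_toEL] at this
    simpa using this

lemma restrictTrace_eq (B : Matrix (Fin d) (Fin d) ℝ) (V : Submodule ℝ (EuclideanSpace ℝ (Fin d))) :
    restrictTrace B V = (projMatrix V * B).trace := by
  rw [← trace_toEL, toEL_mul, toEL_projMatrix, restrictTrace,
    LinearMap.comp_assoc]
  exact LinearMap.trace_comp_comm' V.subtype
    ((Submodule.orthogonalProjection V).toLinearMap.comp (Matrix.toEuclideanLin B))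

lemma restrictTrace_pos {B : Matrix (Fin d) (Fin d) ℝ} (hB : B.PosDef)
    {V : Submodule ℝ (EuclideanSpace ℝ (Fin d))} (hV : V ≠ ⊥) :
    0 < restrictTrace B V := by
  classical
  set b := stdOrthonormalBasis ℝ V
  rw [restrictTrace, LinearMap.trace_eq_matrix_trace ℝ b.toBasis, Matrix.trace]
  have hpos : ∀ i, 0 < ((LinearMap.toMatrix b.toBasis b.toBasis)
      (((Submodule.orthogonalProjection V).toLinearMap.comp (Matrix.toEuclideanLin B)).comp V.subtype)).diag i := by
    intro i
    rw [Matrix.diag, LinearMap.toMatrix_apply, OrthonormalBasis.coe_toBasis,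
      OrthonormalBasis.coe_toBasis_repr_apply, OrthonormalBasis.repr_apply_apply]
    have hbne : ((b i : V) : EuclideanSpace ℝ (Fin d)) ≠ 0 := by
      simpa [Submodule.coe_eq_zero] using b.toBasis.ne_zero i
    have key : ⟪((b i : V) : EuclideanSpace ℝ (Fin d)),
        ((Submodule.orthogonalProjection V (Matrix.toEuclideanLin B (b i)) : V) : EuclideanSpace ℝ (Fin d))⟫_ℝ
        = ⟪((b i : V) : EuclideanSpace ℝ (Fin d)), Matrix.toEuclideanLin B (b i)⟫_ℝ := by
      set y := Matrix.toEuclideanLin B ((b i : V) : EuclideanSpace ℝ (Fin d))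
      have horth := Submodule.sub_starProjection_mem_orthogonal (K := V) y
      have hz : ⟪((b i : V) : EuclideanSpace ℝ (Fin d)), y - Submodule.orthogonalProjection V y⟫_ℝ = 0 :=
        (Submodule.mem_orthogonal V _).1 horth _ (b i).2
      have := inner_sub_right (𝕜 := ℝ) ((b i : V) : EuclideanSpace ℝ (Fin d)) y (Submodule.orthogonalProjection V y)
      rw [this] at hz
      linarith
    calc (0:ℝ) < ⟪((b i : V) : EuclideanSpace ℝ (Fin d)),
          Matrix.toEuclideanLin B (b i)⟫_ℝ := ((posDef_iff_inner B).1 hB).2 _ hbne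
      _ = _ := by
          rw [← key]
          rfl
  have hne : Nonempty (Fin (Module.finrank ℝ V)) := by
    have : Nontrivial V := Submodule.nontrivial_iff_ne_bot.2 hV
    simpa using Fin.pos_iff_nonempty.1 Module.finrank_pos
  exact Finset.sum_pos (fun i _ => hpos i) Finset.univ_nonempty

lemma eqOn_iSup {r : ℕ} {V : Fin r → Submodule ℝ (EuclideanSpace ℝ (Fin d))}
    (hsup : (⨆ i, V i) = ⊤) {f g : EuclideanSpace ℝ (Fin d) →ₗ[ℝ] EuclideanSpace ℝ (Fin d)}
    (h : ∀ i, ∀ v ∈ V i, f v = g v) : f = g := by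
  have hker : ∀ i, V i ≤ LinearMap.ker (f - g) := fun i v hv => by
    simp [LinearMap.mem_ker, sub_eq_zero, h i v hv]
  have hk : LinearMap.ker (f - g) = ⊤ := top_unique (hsup ▸ iSup_le hker)
  exact sub_eq_zero.1 (LinearMap.ker_eq_top.1 hk)

lemma matrix_eqOn_iSup {r : ℕ} {V : Fin r → Submodule ℝ (EuclideanSpace ℝ (Fin d))}
    (hsup : (⨆ i, V i) = ⊤) {M N : Matrix (Fin d) (Fin d) ℝ}
    (h : ∀ i, ∀ v ∈ V i, toEuclideanLin M v = toEuclideanLin N v) : M = N :=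
  Matrix.toEuclideanLin.injective (eqOn_iSup hsup h)

lemma toEL_proj_apply (W : Submodule ℝ (EuclideanSpace ℝ (Fin d))) (x : EuclideanSpace ℝ (Fin d)) :
    toEuclideanLin (projMatrix W) x = Submodule.orthogonalProjection W x := by
  rw [toEL_projMatrix]; rfl

lemma toEL_proj_of_mem {W : Submodule ℝ (EuclideanSpace ℝ (Fin d))} {v : EuclideanSpace ℝ (Fin d)}
    (hv : v ∈ W) : toEuclideanLin (projMatrix W) v = v := by
  rw [toEL_proj_apply]
  exact Submodule.starProjection_eq_self_iff.2 hv

lemma toEL_proj_of_orth {W : Submodule ℝ (EuclideanSpace ℝ (Fin d))} {v : EuclideanSpace ℝ (Fin d)}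
    (hv : v ∈ Wᗮ) : toEuclideanLin (projMatrix W) v = 0 := by
  rw [toEL_proj_apply]
  rw [Submodule.orthogonalProjection_mem_subspace_orthogonalComplement_eq_zero hv]
  simp

lemma P_idem (W : Submodule ℝ (EuclideanSpace ℝ (Fin d))) :
    projMatrix W * projMatrix W = projMatrix W := by
  apply Matrix.toEuclideanLin.injective
  rw [toEL_mul]
  refine LinearMap.ext fun x => ?_
  simp only [LinearMap.comp_apply]
  exact toEL_proj_of_mem (by rw [toEL_proj_apply]; exact (Submodule.orthogonalProjection W x).2)

lemma mul_proj_of_eig {S : Matrix (Fin d) (Fin d) ℝ} {W : Submodule ℝ (EuclideanSpace ℝ (Fin d))}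
    {ν : ℝ} (hW : ∀ v ∈ W, toEuclideanLin S v = ν • v) :
    S * projMatrix W = ν • projMatrix W := by
  apply Matrix.toEuclideanLin.injective
  rw [toEL_mul, _root_.map_smul]
  refine LinearMap.ext fun x => ?_
  simp only [LinearMap.comp_apply, LinearMap.smul_apply]
  rw [toEL_proj_apply]
  exact hW _ (Submodule.orthogonalProjection W x).2

lemma inner_proj_self (W : Submodule ℝ (EuclideanSpace ℝ (Fin d))) (x : EuclideanSpace ℝ (Fin d)) :
    ⟪x, (Submodule.orthogonalProjection W x : EuclideanSpace ℝ (Fin d))⟫_ℝ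
      = ⟪(Submodule.orthogonalProjection W x : EuclideanSpace ℝ (Fin d)),
          (Submodule.orthogonalProjection W x : EuclideanSpace ℝ (Fin d))⟫_ℝ := by
  have h := Submodule.sub_starProjection_mem_orthogonal (K := W) x
  have hz : ⟪x - (Submodule.orthogonalProjection W x : EuclideanSpace ℝ (Fin d)),
      (Submodule.orthogonalProjection W x : EuclideanSpace ℝ (Fin d))⟫_ℝ = 0 :=
    (Submodule.mem_orthogonal' _ _).1 h _ (Submodule.orthogonalProjection W x).2
  rw [inner_sub_left] at hz
  linarith

lemma eig_pos_of_posdef {S : Matrix (Fin d) (Fin d) ℝ} (hS : S.PosDef)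
    {W : Submodule ℝ (EuclideanSpace ℝ (Fin d))} (hW : W ≠ ⊥) {ν : ℝ}
    (h : ∀ v ∈ W, toEuclideanLin S v = ν • v) : 0 < ν := by
  obtain ⟨v, hv, hv0⟩ := Submodule.exists_mem_ne_zero_of_ne_bot hW
  have h1 := ((posDef_iff_inner S).1 hS).2 v hv0
  rw [h v hv, real_inner_smul_right] at h1
  have h2 : (0:ℝ) < ⟪v, v⟫_ℝ :=
    lt_of_le_of_ne real_inner_self_nonneg (Ne.symm (inner_self_ne_zero.2 hv0))
  nlinarith

lemma smulsum_mul_trace {r : ℕ} (x : Fin r → ℝ) (P : Fin r → Matrix (Fin d) (Fin d) ℝ)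
    (M : Matrix (Fin d) (Fin d) ℝ) :
    ((∑ i, x i • P i) * M).trace = ∑ i, x i * (P i * M).trace := by
  rw [Finset.sum_mul, Matrix.trace_sum]
  congr 1
  ext i
  rw [smul_mul_assoc, Matrix.trace_smul, smul_eq_mul]

lemma inv_eq_sum {r : ℕ} {P : Fin r → Matrix (Fin d) (Fin d) ℝ} (hsum : ∑ i, P i = 1)
    {S : Matrix (Fin d) (Fin d) ℝ} (hdet : IsUnit S.det) {ν : Fin r → ℝ} (hν : ∀ i, ν i ≠ 0)
    (hSP : ∀ i, S * P i = ν i • P i) :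
    S = ∑ i, ν i • P i ∧ S⁻¹ = ∑ i, (ν i)⁻¹ • P i := by
  constructor
  · calc S = S * ∑ i, P i := by rw [hsum, mul_one]
      _ = ∑ i, ν i • P i := by rw [Finset.mul_sum]; exact Finset.sum_congr rfl fun i _ => hSP i
  · have hinv : ∀ i, S⁻¹ * P i = (ν i)⁻¹ • P i := by
      intro i
      have h1 : S⁻¹ * (S * P i) = P i := by
        rw [← mul_assoc, Matrix.nonsing_inv_mul _ hdet, one_mul]
      rw [hSP i, mul_smul_comm] at h1
      calc S⁻¹ * P i = (ν i)⁻¹ • (ν i • (S⁻¹ * P i)) := by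
            rw [smul_smul, inv_mul_cancel₀ (hν i), one_smul]
        _ = (ν i)⁻¹ • P i := by rw [h1]
    calc S⁻¹ = S⁻¹ * ∑ i, P i := by rw [hsum, mul_one]
      _ = ∑ i, (ν i)⁻¹ • P i := by
          rw [Finset.mul_sum]; exact Finset.sum_congr rfl fun i _ => hinv i

lemma amgm {b c x : ℝ} (hb : 0 < b) (hc : 0 < c) (hx : 0 < x) :
    2 * Real.sqrt (b * c) ≤ x⁻¹ * b + x * c := by
  have h1 : Real.sqrt (x⁻¹*b) ^ 2 = x⁻¹*b := Real.sq_sqrt (by positivity)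
  have h2 : Real.sqrt (x*c) ^ 2 = x*c := Real.sq_sqrt (by positivity)
  have h3 : Real.sqrt (x⁻¹*b) * Real.sqrt (x*c) = Real.sqrt (b*c) := by
    rw [← Real.sqrt_mul (by positivity)]
    congr 1
    field_simp
  nlinarith [two_mul_le_add_sq (Real.sqrt (x⁻¹*b)) (Real.sqrt (x*c))]

lemma amgm_eq {b c : ℝ} (hb : 0 < b) (hc : 0 < c) :
    (Real.sqrt (b/c))⁻¹ * b + Real.sqrt (b/c) * c = 2 * Real.sqrt (b*c) := by
  have hsb : Real.sqrt b > 0 := Real.sqrt_pos.2 hb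
  have hsc : Real.sqrt c > 0 := Real.sqrt_pos.2 hc
  have hd : Real.sqrt (b/c) = Real.sqrt b / Real.sqrt c := Real.sqrt_div hb.le c
  have hm : Real.sqrt (b*c) = Real.sqrt b * Real.sqrt c := Real.sqrt_mul hb.le c
  have hb2 : Real.sqrt b * Real.sqrt b = b := Real.mul_self_sqrt hb.le
  have hc2 : Real.sqrt c * Real.sqrt c = c := Real.mul_self_sqrt hc.le
  rw [hd, hm]
  field_simp
  nlinarith [hb2, hc2]

lemma mem_eigSp {M : Matrix (Fin d) (Fin d) ℝ} {ρ : ℝ} {v : EuclideanSpace ℝ (Fin d)} :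
    v ∈ eigSp M ρ ↔ toEuclideanLin M v = ρ • v :=
  Module.End.mem_eigenspace_iff

set_option maxHeartbeats 1000000 in
/-- Let `ℝ^d = V₁ ⊕ … ⊕ V_r` be the orthogonal decomposition into eigenspaces
of the positive definite matrix `A` with pairwise distinct eigenvalues, and let
`Σ* = ∑ i, λᵢ • P_{Vᵢ}` with `λᵢ = √( tr(B|_{Vᵢ}) / tr(B⁻¹|_{Vᵢ}) )`. Then `Σ*` is symmetric
positive definite, aligned with `A`, and attains the infimum defining `M(A, B)`. -/
theorem misalignment_infimum_attained {d : ℕ}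
    (A B : Matrix (Fin d) (Fin d) ℝ) (hA : A.PosDef) (hB : B.PosDef)
    (r : ℕ) (V : Fin r → Submodule ℝ (EuclideanSpace ℝ (Fin d))) (μ : Fin r → ℝ)
    (hμ : Function.Injective μ)
    (hV : ∀ i, V i = eigSp A (μ i)) (hne : ∀ i, V i ≠ ⊥)
    (hsup : (⨆ i, V i) = ⊤)
    (Sstar : Matrix (Fin d) (Fin d) ℝ)
    (hSstar : Sstar = ∑ i,
      Real.sqrt (restrictTrace B (V i) / restrictTrace B⁻¹ (V i)) • projMatrix (V i)) :
    Sstar.PosDef ∧ IsAligned Sstar A ∧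
      (1 / 2) * (Sstar⁻¹ * B + B⁻¹ * Sstar).trace - d = misalignment A B := by
  classical
  let P : Fin r → Matrix (Fin d) (Fin d) ℝ := fun i => projMatrix (V i)
  let bq : Fin r → ℝ := fun i => restrictTrace B (V i)
  let cq : Fin r → ℝ := fun i => restrictTrace B⁻¹ (V i)
  let lam : Fin r → ℝ := fun i => Real.sqrt (bq i / cq i)
  have hP : ∀ i, P i = projMatrix (V i) := fun _ => rfl
  have hSstar' : Sstar = ∑ i, lam i • P i := hSstar
  have hBinv : (B⁻¹).PosDef := hB.inv
  have hbq : ∀ i, 0 < bq i := fun i => restrictTrace_pos hB (hne i)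
  have hcq : ∀ i, 0 < cq i := fun i => restrictTrace_pos hBinv (hne i)
  have hlam : ∀ i, 0 < lam i := fun i => Real.sqrt_pos.2 (div_pos (hbq i) (hcq i))
  have hAs : (Matrix.toEuclideanLin A).IsSymmetric :=
    (Matrix.isHermitian_iff_isSymmetric).1 hA.1
  -- orthogonality of the V i
  have hVle : ∀ i j, i ≠ j → V i ≤ (V j)ᗮ := by
    intro i j hij v hv
    rw [Submodule.mem_orthogonal]
    intro w hw
    rw [hV i] at hv
    rw [hV j] at hw
    have hμne : μ j ≠ μ i := fun h => hij (hμ h).symm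
    exact hAs.orthogonalFamily_eigenspaces hμne ⟨w, hw⟩ ⟨v, hv⟩
  -- sum of projections is the identity
  have hsumP : ∑ i, P i = 1 := by
    refine matrix_eqOn_iSup hsup fun j v hv => ?_
    rw [map_sum, LinearMap.sum_apply, toEL_one, LinearMap.id_apply,
      Finset.sum_eq_single j]
    · exact toEL_proj_of_mem hv
    · intro i _ hij
      exact toEL_proj_of_orth (hVle j i (Ne.symm hij) hv)
    · intro h; exact absurd (Finset.mem_univ j) h
  -- eigen-action of Sstar
  have hSeig : ∀ j, ∀ v ∈ V j, toEuclideanLin Sstar v = lam j • v := by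
    intro j v hv
    rw [hSstar', map_sum, LinearMap.sum_apply, Finset.sum_eq_single j]
    · rw [_root_.map_smul, LinearMap.smul_apply, toEL_proj_of_mem hv]
    · intro i _ hij
      rw [_root_.map_smul, LinearMap.smul_apply, toEL_proj_of_orth (hVle j i (Ne.symm hij) hv),
        smul_zero]
    · intro h; exact absurd (Finset.mem_univ j) h
  have hSstarP : ∀ j, Sstar * P j = lam j • P j := fun j => mul_proj_of_eig (hSeig j)
  -- Hermitian
  have hherm : Sstar.IsHermitian := by
    rw [hSstar']
    show (∑ i, lam i • P i)ᴴ = ∑ i, lam i • P i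
    rw [Matrix.conjTranspose_sum]
    refine Finset.sum_congr rfl fun i _ => ?_
    rw [Matrix.conjTranspose_smul, star_trivial, (projMatrix_isHermitian (V i)).eq]
  -- positive definiteness
  have hpd : Sstar.PosDef := by
    refine (posDef_iff_inner Sstar).2 ⟨hherm, fun v hv => ?_⟩
    have hdecomp : ∑ i, toEuclideanLin (P i) v = v := by
      have h := congrArg (fun M => toEuclideanLin M v) hsumP
      simpa [map_sum, LinearMap.sum_apply, toEL_one] using h
    have hex : ∃ i, toEuclideanLin (P i) v ≠ 0 := by
      by_contra h
      push_neg at h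
      apply hv
      rw [← hdecomp]
      simp [h]
    obtain ⟨j, hj⟩ := hex
    have hmain : ⟪v, toEuclideanLin Sstar v⟫_ℝ
        = ∑ i, lam i * ⟪toEuclideanLin (P i) v, toEuclideanLin (P i) v⟫_ℝ := by
      rw [hSstar', map_sum, LinearMap.sum_apply, inner_sum]
      refine Finset.sum_congr rfl fun i _ => ?_
      rw [_root_.map_smul, LinearMap.smul_apply, real_inner_smul_right]
      congr 1
      rw [hP, toEL_proj_apply]
      exact inner_proj_self _ v
    rw [hmain]
    refine Finset.sum_pos' (fun i _ => mul_nonneg (hlam i).le real_inner_self_nonneg)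
      ⟨j, Finset.mem_univ j, mul_pos (hlam j)
        (lt_of_le_of_ne real_inner_self_nonneg (Ne.symm (inner_self_ne_zero.2 hj)))⟩
  -- alignment
  have halign : IsAligned Sstar A := by
    intro ν
    by_cases hcase : ∃ i, μ i = ν
    · obtain ⟨i, hi⟩ := hcase
      refine ⟨lam i, ?_⟩
      rw [← hi, ← hV i]
      intro v hv
      exact mem_eigSp.2 (hSeig i v hv)
    · push_neg at hcase
      refine ⟨0, ?_⟩
      have hbot : eigSp A ν = ⊥ := by
        have hdis := Module.End.eigenspaces_iSupIndep (Matrix.toEuclideanLin A) ν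
        have hle : (⊤ : Submodule ℝ (EuclideanSpace ℝ (Fin d)))
            ≤ ⨆ (ν' : ℝ) (_ : ν' ≠ ν), Module.End.eigenspace (Matrix.toEuclideanLin A) ν' := by
          rw [← hsup]
          refine iSup_le fun i => ?_
          rw [hV i]
          exact le_iSup₂ (f := fun ν' (_ : ν' ≠ ν) =>
            Module.End.eigenspace (Matrix.toEuclideanLin A) ν') (μ i) (hcase i)
        exact hdis.eq_bot_of_le (le_trans le_top hle)
      rw [hbot]
      exact bot_le
  -- the trace value
  have hdet : IsUnit Sstar.det := hpd.det_pos.ne'.isUnit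
  obtain ⟨hSeq, hSinveq⟩ := inv_eq_sum hsumP hdet (fun i => (hlam i).ne') hSstarP
  have htrP : ∀ i, (P i * B).trace = bq i := fun i => (restrictTrace_eq B (V i)).symm
  have htrPinv : ∀ i, (P i * B⁻¹).trace = cq i := fun i => (restrictTrace_eq B⁻¹ (V i)).symm
  have htrace : ∀ (S : Matrix (Fin d) (Fin d) ℝ) (ν : Fin r → ℝ),
      S = ∑ i, ν i • P i → S⁻¹ = ∑ i, (ν i)⁻¹ • P i →
      (S⁻¹ * B + B⁻¹ * S).trace = ∑ i, ((ν i)⁻¹ * bq i + ν i * cq i) := by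
    intro S ν h1 h2
    rw [Matrix.trace_add]
    have t1 : (S⁻¹ * B).trace = ∑ i, (ν i)⁻¹ * bq i := by
      rw [h2, smulsum_mul_trace]
      exact Finset.sum_congr rfl fun i _ => by rw [htrP i]
    have t2 : (B⁻¹ * S).trace = ∑ i, ν i * cq i := by
      rw [Matrix.trace_mul_comm, h1, smulsum_mul_trace]
      exact Finset.sum_congr rfl fun i _ => by rw [htrPinv i]
    rw [t1, t2, ← Finset.sum_add_distrib]
  have hvalue : (Sstar⁻¹ * B + B⁻¹ * Sstar).trace = ∑ i, 2 * Real.sqrt (bq i * cq i) := by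
    rw [htrace Sstar lam hSeq hSinveq]
    exact Finset.sum_congr rfl fun i _ => amgm_eq (hbq i) (hcq i)
  -- lower bound over the admissible set
  set T : Set ℝ := {m : ℝ | ∃ S : Matrix (Fin d) (Fin d) ℝ,
    S.PosDef ∧ IsAligned S A ∧ m = (1 / 2) * (S⁻¹ * B + B⁻¹ * S).trace - d} with hT
  have hlb : ∀ m ∈ T, (1/2 : ℝ) * (∑ i, 2 * Real.sqrt (bq i * cq i)) - d ≤ m := by
    rintro m ⟨S, hSpd, hSal, rfl⟩
    choose ν hν using fun i => hSal (μ i)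
    have hSeigv : ∀ i, ∀ v ∈ V i, toEuclideanLin S v = ν i • v := by
      intro i v hv
      exact mem_eigSp.1 (hν i ((hV i) ▸ hv))
    have hνpos : ∀ i, 0 < ν i := fun i => eig_pos_of_posdef hSpd (hne i) (hSeigv i)
    have hSP : ∀ i, S * P i = ν i • P i := fun i => mul_proj_of_eig (hSeigv i)
    obtain ⟨h1, h2⟩ := inv_eq_sum hsumP hSpd.det_pos.ne'.isUnit (fun i => (hνpos i).ne') hSP
    rw [htrace S ν h1 h2]
    have hsumle : ∑ i, 2 * Real.sqrt (bq i * cq i) ≤ ∑ i, ((ν i)⁻¹ * bq i + ν i * cq i) :=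
      Finset.sum_le_sum fun i _ => amgm (hbq i) (hcq i) (hνpos i)
    have : (1/2 : ℝ) * (∑ i, 2 * Real.sqrt (bq i * cq i))
        ≤ (1/2 : ℝ) * ∑ i, ((ν i)⁻¹ * bq i + ν i * cq i) := by linarith
    linarith
  have hmem : (1/2 : ℝ) * (Sstar⁻¹ * B + B⁻¹ * Sstar).trace - d ∈ T :=
    ⟨Sstar, hpd, halign, rfl⟩
  refine ⟨hpd, halign, ?_⟩
  have hmis : misalignment A B = sInf T := rfl
  rw [hmis]
  refine le_antisymm ?_ (csInf_le ⟨_, hlb⟩ hmem)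
  refine le_csInf ⟨_, hmem⟩ fun m hm => ?_
  calc (1/2 : ℝ) * (Sstar⁻¹ * B + B⁻¹ * Sstar).trace - d
      = (1/2 : ℝ) * (∑ i, 2 * Real.sqrt (bq i * cq i)) - d := by rw [hvalue]
    _ ≤ m := hlb m hm
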